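/- Let U = B_s A_s ⋯ B_1 A_1 be a product of unitaries with common fixed vector ξ of the B_i (B_i ξ = ξ for all i). Then the controlled adjoint satisfies: for all φ ∈ H and α, β ∈ ℂ, (I ⊗ ⟨ξ|) applied to ∏_{i=1}^{s} (|0⟩⟨0| ⊗ B_i† + |1⟩⟨1| ⊗ A_i† B_i†) ((α|0⟩ + β|1⟩) ⊗ φ) (with the i = 1 factor leftmost) equals α ⟨ξ, φ⟩ |0⟩ + β ⟨ξ, U† φ⟩ |1⟩, which coincides with (I ⊗ ⟨ξ|)(|0⟩⟨0| ⊗ I + |1⟩⟨1| ⊗ U†)((α|0⟩ + β|1⟩) ⊗ φ). -/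

import Mathlib

open Matrix Kronecker

noncomputable section

/-- Projector `|b⟩⟨b|` on one qubit. -/
def proj (b : Fin 2) : Matrix (Fin 2) (Fin 2) ℂ :=
  fun i j => if i = b ∧ j = b then 1 else 0

lemma proj_mul_self (b : Fin 2) : proj b * proj b = proj b := by
  ext i j
  fin_cases b <;> fin_cases i <;> fin_cases j <;>
    simp [proj, Matrix.mul_apply, Fin.sum_univ_two]

lemma proj_zero_mul_one : proj 0 * proj 1 = 0 := by
  ext i j
  fin_cases i <;> fin_cases j <;> simp [proj, Matrix.mul_apply, Fin.sum_univ_two]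

lemma proj_one_mul_zero : proj 1 * proj 0 = 0 := by
  ext i j
  fin_cases i <;> fin_cases j <;> simp [proj, Matrix.mul_apply, Fin.sum_univ_two]

lemma proj_add_proj : proj 0 + proj 1 = (1 : Matrix (Fin 2) (Fin 2) ℂ) := by
  ext i j
  fin_cases i <;> fin_cases j <;> simp [proj, Matrix.one_apply]

/-- Product of controlled matrices. -/
lemma prod_ctrl {ι : Type*} [Fintype ι] [DecidableEq ι]
    (l : List (Matrix ι ι ℂ × Matrix ι ι ℂ)) :
    (l.map fun p => proj 0 ⊗ₖ p.1 + proj 1 ⊗ₖ p.2).prod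
      = proj 0 ⊗ₖ (l.map Prod.fst).prod + proj 1 ⊗ₖ (l.map Prod.snd).prod := by
  induction l with
  | nil =>
      simp only [List.map_nil, List.prod_nil, ← Matrix.add_kronecker, proj_add_proj,
        Matrix.one_kronecker_one]
  | cons p l ih =>
      simp only [List.map_cons, List.prod_cons, ih, add_mul, mul_add,
        ← Matrix.mul_kronecker_mul, proj_mul_self, proj_zero_mul_one, proj_one_mul_zero,
        Matrix.zero_kronecker, add_zero, zero_add]

/-- Kronecker product acting on a product vector. -/
lemma kron_mulVec {ι : Type*} [Fintype ι] (P : Matrix (Fin 2) (Fin 2) ℂ)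
    (N : Matrix ι ι ℂ) (x : Fin 2 → ℂ) (y : ι → ℂ) (b : Fin 2) (i : ι) :
    (P ⊗ₖ N).mulVec (fun p : Fin 2 × ι => x p.1 * y p.2) (b, i)
      = P.mulVec x b * N.mulVec y i := by
  simp only [Matrix.mulVec, dotProduct, Fintype.sum_prod_type,
    Matrix.kroneckerMap_apply, Finset.sum_mul, Finset.mul_sum]
  rw [Finset.sum_comm]
  exact Finset.sum_congr rfl fun j _ => Finset.sum_congr rfl fun c _ => by ring

lemma fix_prod {ι : Type*} [Fintype ι] [DecidableEq ι] (ξ : ι → ℂ)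
    (l : List (Matrix ι ι ℂ)) (h : ∀ N ∈ l, N.mulVec ξ = ξ) :
    l.prod.mulVec ξ = ξ := by
  induction l with
  | nil => simp
  | cons N l ih =>
      rw [List.prod_cons, ← Matrix.mulVec_mulVec, ih fun M hM => h M (List.mem_cons_of_mem _ hM),
        h N List.mem_cons_self]

lemma fix_inner {ι : Type*} [Fintype ι] [DecidableEq ι] (ξ : ι → ℂ)
    (N : Matrix ι ι ℂ) (h : N.mulVec ξ = ξ) (φ : ι → ℂ) :
    ∑ i, (starRingEnd ℂ) (ξ i) * Nᴴ.mulVec φ i = ∑ i, (starRingEnd ℂ) (ξ i) * φ i := by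
  have h1 : star ξ ⬝ᵥ Nᴴ.mulVec φ = star ξ ⬝ᵥ φ := by
    rw [Matrix.dotProduct_mulVec, ← Matrix.star_mulVec, h]
  simpa [dotProduct] using h1

lemma sum_mul_left {ι : Type*} [Fintype ι] (c d : ι → ℂ) (a : ℂ) :
    ∑ i, c i * (a * d i) = a * ∑ i, c i * d i := by
  rw [Finset.mul_sum]
  exact Finset.sum_congr rfl fun i _ => by ring

/-- with `U = B_s A_s ⋯ B_1 A_1` and common fixed unit vector `ξ` of the `B_i`,
applying `(I ⊗ ⟨ξ|)` to `∏_{i=1}^{s}(|0⟩⟨0| ⊗ B_i† + |1⟩⟨1| ⊗ A_i† B_i†)((α|0⟩+β|1⟩) ⊗ φ)`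
(with the `i = 1` factor leftmost) equals `α⟨ξ,φ⟩|0⟩ + β⟨ξ,U†φ⟩|1⟩`, which also coincides
with `(I ⊗ ⟨ξ|)(|0⟩⟨0| ⊗ I + |1⟩⟨1| ⊗ U†)((α|0⟩+β|1⟩) ⊗ φ)`. -/
theorem stmt3 {ι : Type*} [Fintype ι] [DecidableEq ι] (s : ℕ)
    (A B : Fin s → Matrix ι ι ℂ)
    (hA : ∀ i, A i ∈ Matrix.unitaryGroup ι ℂ)
    (hB : ∀ i, B i ∈ Matrix.unitaryGroup ι ℂ)
    (ξ : ι → ℂ) (hξ : ∑ i, (starRingEnd ℂ) (ξ i) * ξ i = 1)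
    (hfix : ∀ i, (B i).mulVec ξ = ξ)
    (φ : ι → ℂ) (α β : ℂ) :
    (fun b : Fin 2 => ∑ i, (starRingEnd ℂ) (ξ i) *
      ((List.ofFn fun i : Fin s =>
          proj 0 ⊗ₖ (B i)ᴴ + proj 1 ⊗ₖ ((A i)ᴴ * (B i)ᴴ)).prod).mulVec
        (fun p : Fin 2 × ι => ![α, β] p.1 * φ p.2) (b, i))
    = (fun b : Fin 2 =>
        ![α * (∑ i, (starRingEnd ℂ) (ξ i) * φ i),
          β * (∑ i, (starRingEnd ℂ) (ξ i) *
            (((List.ofFn fun i : Fin s => B i * A i).reverse.prod)ᴴ).mulVec φ i)] b)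
    ∧
    (fun b : Fin 2 => ∑ i, (starRingEnd ℂ) (ξ i) *
      ((proj 0 ⊗ₖ (1 : Matrix ι ι ℂ) +
          proj 1 ⊗ₖ ((List.ofFn fun i : Fin s => B i * A i).reverse.prod)ᴴ).mulVec
        (fun p : Fin 2 × ι => ![α, β] p.1 * φ p.2) (b, i)))
    = (fun b : Fin 2 =>
        ![α * (∑ i, (starRingEnd ℂ) (ξ i) * φ i),
          β * (∑ i, (starRingEnd ℂ) (ξ i) *
            (((List.ofFn fun i : Fin s => B i * A i).reverse.prod)ᴴ).mulVec φ i)] b) := by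
  set U : Matrix ι ι ℂ := (List.ofFn fun i : Fin s => B i * A i).reverse.prod with hU
  have hUH : Uᴴ = (List.ofFn fun i : Fin s => (A i)ᴴ * (B i)ᴴ).prod := by
    rw [hU, Matrix.conjTranspose_list_prod, List.map_reverse, List.reverse_reverse,
      List.map_ofFn]
    have h2 : (conjTranspose ∘ fun i : Fin s => B i * A i)
        = fun i : Fin s => (A i)ᴴ * (B i)ᴴ :=
      funext fun i => Matrix.conjTranspose_mul _ _
    rw [h2]
  have hBH : ((List.ofFn fun i : Fin s => B i).reverse.prod)ᴴ
      = (List.ofFn fun i : Fin s => (B i)ᴴ).prod := by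
    rw [Matrix.conjTranspose_list_prod, List.map_reverse, List.reverse_reverse,
      List.map_ofFn]
    rfl
  have hBfix : ((List.ofFn fun i : Fin s => B i).reverse.prod).mulVec ξ = ξ := by
    refine fix_prod ξ _ fun N hN => ?_
    rw [List.mem_reverse, List.mem_ofFn] at hN
    obtain ⟨i, rfl⟩ := hN
    exact hfix i
  have hprod : (List.ofFn fun i : Fin s =>
      proj 0 ⊗ₖ (B i)ᴴ + proj 1 ⊗ₖ ((A i)ᴴ * (B i)ᴴ)).prod
      = proj 0 ⊗ₖ (List.ofFn fun i : Fin s => (B i)ᴴ).prod + proj 1 ⊗ₖ Uᴴ := by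
    have h1 : (List.ofFn fun i : Fin s =>
        proj 0 ⊗ₖ (B i)ᴴ + proj 1 ⊗ₖ ((A i)ᴴ * (B i)ᴴ))
        = (List.ofFn fun i : Fin s => ((B i)ᴴ, (A i)ᴴ * (B i)ᴴ)).map
            (fun p => proj 0 ⊗ₖ p.1 + proj 1 ⊗ₖ p.2) := by
      rw [List.map_ofFn]; rfl
    rw [h1, prod_ctrl, List.map_ofFn, List.map_ofFn, hUH]
    rfl
  have hproj0 : (proj 0).mulVec ![α, β] = ![α, 0] := by
    funext b
    fin_cases b <;> simp [proj, Matrix.mulVec, dotProduct, Fin.sum_univ_two]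
  have hproj1 : (proj 1).mulVec ![α, β] = ![0, β] := by
    funext b
    fin_cases b <;> simp [proj, Matrix.mulVec, dotProduct, Fin.sum_univ_two]
  constructor
  · funext b
    rw [hprod]
    simp only [Matrix.add_mulVec, Pi.add_apply, kron_mulVec, hproj0, hproj1]
    fin_cases b
    · simp only [Fin.mk_zero, Fin.isValue, Matrix.cons_val_zero, mul_zero, zero_mul,
        add_zero, zero_add]
      rw [← hBH, sum_mul_left, fix_inner ξ _ hBfix]
    · simp only [Fin.mk_one, Fin.isValue, Matrix.cons_val_one, Matrix.head_cons, Matrix.cons_val_zero, mul_zero,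
        zero_mul, add_zero, zero_add]
      rw [sum_mul_left]
  · funext b
    simp only [Matrix.add_mulVec, Pi.add_apply, kron_mulVec, hproj0, hproj1,
      Matrix.one_mulVec]
    fin_cases b
    · simp only [Fin.mk_zero, Fin.isValue, Matrix.cons_val_zero, mul_zero, zero_mul,
        add_zero, zero_add]
      rw [sum_mul_left]
    · simp only [Fin.mk_one, Fin.isValue, Matrix.cons_val_one, Matrix.head_cons, Matrix.cons_val_zero, mul_zero,
        zero_mul, add_zero, zero_add]
      rw [sum_mul_left]
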